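/- Let A be a dg-algebra and let x_• and y_• be homotopic twisting n-sequences in A. Then their extension obstruction classes agree: o_n(x_•) = o_n(y_•) in H^{2n+2}(A). -/

import Mathlib

open Finset

section Helpers

variable {M : Type*} [AddCommMonoid M]

def PP (n : ℕ) : Finset (ℕ × ℕ) :=
  (Finset.range n ×ˢ Finset.range n).filter (fun p => 0 < p.1 ∧ 0 < p.2 ∧ p.1 + p.2 < n)

lemma mem_PP {n : ℕ} {p : ℕ × ℕ} : p ∈ PP n ↔ 0 < p.1 ∧ 0 < p.2 ∧ p.1 + p.2 < n := by
  simp only [PP, mem_filter, mem_product, mem_range]; omega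

lemma reflect_sum (n : ℕ) (f : ℕ → M) :
    ∑ i ∈ Ioo 0 n, f i = ∑ i ∈ Ioo 0 n, f (n - i) := by
  refine sum_nbij' (fun i => n - i) (fun i => n - i) ?_ ?_ ?_ ?_ ?_
  · intro a ha; simp only [mem_Ioo] at *; omega
  · intro a ha; simp only [mem_Ioo] at *; omega
  · intro a ha; simp only [mem_Ioo] at ha; omega
  · intro a ha; simp only [mem_Ioo] at ha; omega
  · intro a ha; simp only [mem_Ioo] at ha; congr 1; omega

lemma shape1 (n : ℕ) (f : ℕ → ℕ → M) :
    ∑ i ∈ Ioo 0 n, ∑ a ∈ Ioo 0 i, f i a = ∑ p ∈ PP n, f (p.1 + p.2) p.1 := by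
  rw [Finset.sum_sigma' (Ioo 0 n) (fun i => Ioo 0 i) f]
  refine sum_nbij' (fun q => (q.2, q.1 - q.2)) (fun p => ⟨p.1 + p.2, p.1⟩) ?_ ?_ ?_ ?_ ?_
  · rintro ⟨i, a⟩ ha; simp only [mem_sigma, mem_Ioo] at ha; rw [mem_PP]; dsimp only; omega
  · rintro ⟨a, b⟩ hp; rw [mem_PP] at hp; simp only [mem_sigma, mem_Ioo]; omega
  · rintro ⟨i, a⟩ ha; simp only [mem_sigma, mem_Ioo] at ha; dsimp only
    have : a + (i - a) = i := by omega
    simp [this]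
  · rintro ⟨a, b⟩ hp; rw [mem_PP] at hp
    show ((a:ℕ), (a + b) - a) = (a, b)
    simp only [Prod.mk.injEq, true_and]; omega
  · rintro ⟨i, a⟩ ha; simp only [mem_sigma, mem_Ioo] at ha; dsimp only; congr 1; omega

lemma shape2 (n : ℕ) (f : ℕ → ℕ → M) :
    ∑ i ∈ Ioo 0 n, ∑ a ∈ Ioo 0 (n - i), f i a = ∑ p ∈ PP n, f p.1 p.2 := by
  rw [Finset.sum_sigma' (Ioo 0 n) (fun i => Ioo 0 (n - i)) f]
  refine sum_nbij' (fun q => (q.1, q.2)) (fun p => ⟨p.1, p.2⟩) ?_ ?_ ?_ ?_ ?_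
  · rintro ⟨i, a⟩ ha; simp only [mem_sigma, mem_Ioo] at ha; rw [mem_PP]; dsimp only; omega
  · rintro ⟨a, b⟩ hp; rw [mem_PP] at hp; simp only [mem_sigma, mem_Ioo]; omega
  · rintro ⟨i, a⟩ _; rfl
  · rintro ⟨a, b⟩ _; rfl
  · rintro ⟨i, a⟩ _; rfl

lemma swapPP (n : ℕ) (f : ℕ → ℕ → M) :
    ∑ p ∈ PP n, f p.1 p.2 = ∑ p ∈ PP n, f p.1 (n - p.1 - p.2) := by
  refine sum_nbij' (fun p => (p.1, n - p.1 - p.2)) (fun p => (p.1, n - p.1 - p.2)) ?_ ?_ ?_ ?_ ?_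
  · rintro ⟨a, b⟩ hp; rw [mem_PP] at *; dsimp only; omega
  · rintro ⟨a, b⟩ hp; rw [mem_PP] at *; dsimp only; omega
  · rintro ⟨a, b⟩ hp; rw [mem_PP] at hp
    show ((a:ℕ), n - a - (n - a - b)) = (a, b)
    simp only [Prod.mk.injEq, true_and]; omega
  · rintro ⟨a, b⟩ hp; rw [mem_PP] at hp
    show ((a:ℕ), n - a - (n - a - b)) = (a, b)
    simp only [Prod.mk.injEq, true_and]; omega
  · rintro ⟨a, b⟩ hp; rw [mem_PP] at hp; dsimp only; congr 1; omega

lemma sign_even (i : ℕ) : (((-1 : ℤˣ) ^ (2 * (i : ℤ)) : ℤˣ) : ℤ) = 1 := by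
  rw [zpow_mul]; norm_num [zpow_ofNat]

lemma sign_odd (j : ℕ) : (((-1 : ℤˣ) ^ (2 * (j : ℤ) + 1) : ℤˣ) : ℤ) = -1 := by
  rw [zpow_add, zpow_mul]; norm_num [zpow_ofNat]

end Helpers


/-- A differential graded algebra over `ℤ`. -/
structure DGA where
  A : Type
  [ringA : Ring A]
  grading : ℤ → AddSubgroup A
  mul_mem : ∀ {m n : ℤ} {a b : A}, a ∈ grading m → b ∈ grading n → a * b ∈ grading (m + n)
  d : A →+ A
  d_sq : ∀ a : A, d (d a) = 0
  d_mem : ∀ {m : ℤ} {a : A}, a ∈ grading m → d a ∈ grading (m + 1)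
  leibniz : ∀ {m : ℤ} {a : A}, a ∈ grading m → ∀ b : A,
      d (a * b) = d a * b + (((-1 : ℤˣ) ^ m : ℤˣ) : ℤ) • (a * d b)

attribute [instance] DGA.ringA

/-- A twisting `n`-sequence `(x_3, …, x_{2n−1})`: `x m ∈ A^{2m+1}` for `1 ≤ m < n` and the
twisting relations hold for all `m < n`. -/
def IsTwistingNSeq (G : DGA) (n : ℕ) (x : ℕ → G.A) : Prop :=
  x 0 = 0 ∧ (∀ m : ℕ, x m ∈ G.grading (2 * (m : ℤ) + 1)) ∧
    ∀ m : ℕ, 1 ≤ m → m < n →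
      G.d (x m) + ∑ i ∈ Finset.Ioo 0 m, x i * x (m - i) = 0

/-- An `n`-homotopy `h_• : x_• → y_•` between twisting `n`-sequences. -/
def IsNHomotopy (G : DGA) (n : ℕ) (x y h : ℕ → G.A) : Prop :=
  h 0 = 0 ∧ (∀ m : ℕ, h m ∈ G.grading (2 * (m : ℤ))) ∧
    ∀ m : ℕ, 1 ≤ m → m < n →
      y m - x m + G.d (h m) +
        ∑ i ∈ Finset.Ioo 0 m, (y (m - i) * h i - h i * x (m - i)) = 0

/-- Homotopic twisting `n`-sequences have equal extension obstruction
classes `o_n(x_•) = [∑_{i+j=n} x_{2i+1} x_{2j+1}] ∈ H^{2n+2}(A)`: the difference of the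
obstruction cocycles is the coboundary of an element of degree `2n+1`. -/
theorem obstruction_classes_of_homotopic (G : DGA) (n : ℕ) (hn : 1 ≤ n)
    (x y h : ℕ → G.A)
    (hx : IsTwistingNSeq G n x) (hy : IsTwistingNSeq G n y)
    (hh : IsNHomotopy G n x y h) :
    ∃ c ∈ G.grading (2 * (n : ℤ) + 1),
      (∑ i ∈ Finset.Ioo 0 n, x i * x (n - i)) -
        (∑ i ∈ Finset.Ioo 0 n, y i * y (n - i)) = G.d c := by
  obtain ⟨hx0, hxg, hxr⟩ := hx
  obtain ⟨hy0, hyg, hyr⟩ := hy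
  obtain ⟨hh0, hhg, hhr⟩ := hh
  have hdx : ∀ m : ℕ, 1 ≤ m → m < n →
      G.d (x m) = -∑ a ∈ Finset.Ioo 0 m, x a * x (m - a) := by
    intro m h1 h2
    have h0 := hxr m h1 h2
    have e : G.d (x m) = -∑ a ∈ Finset.Ioo 0 m, x a * x (m - a) +
        (G.d (x m) + ∑ a ∈ Finset.Ioo 0 m, x a * x (m - a)) := by abel
    rw [h0, add_zero] at e; exact e
  have hdy : ∀ m : ℕ, 1 ≤ m → m < n →
      G.d (y m) = -∑ a ∈ Finset.Ioo 0 m, y a * y (m - a) := by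
    intro m h1 h2
    have h0 := hyr m h1 h2
    have e : G.d (y m) = -∑ a ∈ Finset.Ioo 0 m, y a * y (m - a) +
        (G.d (y m) + ∑ a ∈ Finset.Ioo 0 m, y a * y (m - a)) := by abel
    rw [h0, add_zero] at e; exact e
  have hdh : ∀ m : ℕ, 1 ≤ m → m < n →
      G.d (h m) = x m - y m -
        ∑ a ∈ Finset.Ioo 0 m, (y (m - a) * h a - h a * x (m - a)) := by
    intro m h1 h2
    have h0 := hhr m h1 h2
    have e : G.d (h m) = (x m - y m -
        ∑ a ∈ Finset.Ioo 0 m, (y (m - a) * h a - h a * x (m - a))) +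
        (y m - x m + G.d (h m) +
          ∑ a ∈ Finset.Ioo 0 m, (y (m - a) * h a - h a * x (m - a))) := by abel
    rw [h0, add_zero] at e; exact e
  refine ⟨∑ i ∈ Finset.Ioo 0 n, (h i * x (n - i) - y (n - i) * h i), ?_, ?_⟩
  · refine AddSubgroup.sum_mem _ fun i hi => ?_
    rw [Finset.mem_Ioo] at hi
    refine sub_mem ?_ ?_
    · have e1 : (2 * (n : ℤ) + 1) = 2 * (i : ℤ) + (2 * ((n - i : ℕ) : ℤ) + 1) := by
        rw [Nat.cast_sub hi.2.le]; ring
      rw [e1]; exact G.mul_mem (hhg i) (hxg (n - i))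
    · have e2 : (2 * (n : ℤ) + 1) = (2 * ((n - i : ℕ) : ℤ) + 1) + 2 * (i : ℤ) := by
        rw [Nat.cast_sub hi.2.le]; ring
      rw [e2]; exact G.mul_mem (hyg (n - i)) (hhg i)
  · rw [map_sum]
    have step1 : ∀ i ∈ Finset.Ioo 0 n,
        G.d (h i * x (n - i) - y (n - i) * h i) =
        x i * x (n - i) - y i * x (n - i) + y (n - i) * x i - y (n - i) * y i
          - ∑ a ∈ Finset.Ioo 0 i, y (i - a) * h a * x (n - i)
          + ∑ a ∈ Finset.Ioo 0 i, h a * x (i - a) * x (n - i)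
          - ∑ a ∈ Finset.Ioo 0 i, y (n - i) * (y (i - a) * h a)
          + ∑ a ∈ Finset.Ioo 0 i, y (n - i) * (h a * x (i - a))
          - ∑ a ∈ Finset.Ioo 0 (n - i), h i * (x a * x (n - i - a))
          + ∑ a ∈ Finset.Ioo 0 (n - i), y a * y (n - i - a) * h i := by
      intro i hi
      rw [Finset.mem_Ioo] at hi
      have hni1 : 1 ≤ n - i := by omega
      have hnin : n - i < n := by omega
      rw [map_sub, G.leibniz (hhg i) (x (n - i)), G.leibniz (hyg (n - i)) (h i),
        sign_even i, sign_odd (n - i), one_zsmul, neg_one_zsmul,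
        hdx (n - i) hni1 hnin, hdy (n - i) hni1 hnin, hdh i hi.1 hi.2]
      simp only [sub_mul, mul_sub, mul_neg, neg_mul, Finset.sum_mul, Finset.mul_sum,
        Finset.sum_sub_distrib]
      abel
    rw [Finset.sum_congr rfl step1]
    simp only [Finset.sum_sub_distrib, Finset.sum_add_distrib]
    have hA1 : (∑ i ∈ Finset.Ioo 0 n, ∑ a ∈ Finset.Ioo 0 i, y (i - a) * h a * x (n - i))
        = ∑ i ∈ Finset.Ioo 0 n, ∑ a ∈ Finset.Ioo 0 i, y (n - i) * (h a * x (i - a)) := by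
      rw [shape1 n (fun i a => y (i - a) * h a * x (n - i)),
        shape1 n (fun i a => y (n - i) * (h a * x (i - a))),
        swapPP n (fun a b => y (a + b - a) * h a * x (n - (a + b)))]
      refine Finset.sum_congr rfl fun p hp => ?_
      rw [mem_PP] at hp
      rw [show p.1 + (n - p.1 - p.2) - p.1 = n - p.1 - p.2 from by omega,
        show n - (p.1 + (n - p.1 - p.2)) = p.2 from by omega,
        show p.1 + p.2 - p.1 = p.2 from by omega,
        show n - (p.1 + p.2) = n - p.1 - p.2 from by omega,
        mul_assoc]
    have hA5 : (∑ i ∈ Finset.Ioo 0 n, ∑ a ∈ Finset.Ioo 0 (n - i), h i * (x a * x (n - i - a)))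
        = ∑ i ∈ Finset.Ioo 0 n, ∑ a ∈ Finset.Ioo 0 i, h a * x (i - a) * x (n - i) := by
      rw [shape2 n (fun i a => h i * (x a * x (n - i - a))),
        shape1 n (fun i a => h a * x (i - a) * x (n - i))]
      refine Finset.sum_congr rfl fun p hp => ?_
      rw [mem_PP] at hp
      rw [show p.1 + p.2 - p.1 = p.2 from by omega,
        show n - (p.1 + p.2) = n - p.1 - p.2 from by omega,
        mul_assoc]
    have hA6 : (∑ i ∈ Finset.Ioo 0 n, ∑ a ∈ Finset.Ioo 0 (n - i), y a * y (n - i - a) * h i)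
        = ∑ i ∈ Finset.Ioo 0 n, ∑ a ∈ Finset.Ioo 0 i, y (n - i) * (y (i - a) * h a) := by
      rw [shape2 n (fun i a => y a * y (n - i - a) * h i),
        shape1 n (fun i a => y (n - i) * (y (i - a) * h a)),
        swapPP n (fun a b => y b * y (n - a - b) * h a)]
      refine Finset.sum_congr rfl fun p hp => ?_
      rw [mem_PP] at hp
      rw [show n - p.1 - (n - p.1 - p.2) = p.2 from by omega,
        show p.1 + p.2 - p.1 = p.2 from by omega,
        show n - (p.1 + p.2) = n - p.1 - p.2 from by omega,
        mul_assoc]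
    have hQ3 : (∑ i ∈ Finset.Ioo 0 n, y (n - i) * x i)
        = ∑ i ∈ Finset.Ioo 0 n, y i * x (n - i) := by
      rw [reflect_sum n (fun i => y (n - i) * x i)]
      refine Finset.sum_congr rfl fun i hi => ?_
      rw [Finset.mem_Ioo] at hi
      rw [show n - (n - i) = i from by omega]
    have hQ4 : (∑ i ∈ Finset.Ioo 0 n, y (n - i) * y i)
        = ∑ i ∈ Finset.Ioo 0 n, y i * y (n - i) := by
      rw [reflect_sum n (fun i => y (n - i) * y i)]
      refine Finset.sum_congr rfl fun i hi => ?_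
      rw [Finset.mem_Ioo] at hi
      rw [show n - (n - i) = i from by omega]
    rw [hA1, hA5, hA6, hQ3, hQ4]
    abel
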